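/- Let Ω ⊆ ℝ^N be Lebesgue measurable and 1 < φ₁ < φ₂. Then the upper φ-shell Minkowski dimensions at infinity coincide: dim̄_B^{φ₁}(∞,Ω) = dim̄_B^{φ₂}(∞,Ω), while for the lower dimensions dim̲_B^{φ₁}(∞,Ω) ≤ dim̲_B^{φ₂}(∞,Ω). -/

import Mathlib

open MeasureTheory Filter Set
open scoped ENNReal NNReal Topology

noncomputable section

/-- The `[a,b)`-shell centered at the origin in `ℝ^N`. -/
def shell (N : ℕ) (a b : ℝ) : Set (EuclideanSpace ℝ (Fin N)) :=
  {x | a ≤ ‖x‖ ∧ ‖x‖ < b}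

/-- The complement of the open ball `B_t(0)` in `ℝ^N`. -/
def farBall (N : ℕ) (t : ℝ) : Set (EuclideanSpace ℝ (Fin N)) :=
  {x | t ≤ ‖x‖}

/-- Upper φ-shell Minkowski content of `Ω` at infinity. -/
def upperShellContent (N : ℕ) (Ω : Set (EuclideanSpace ℝ (Fin N))) (φ r : ℝ) : ℝ≥0∞ :=
  Filter.limsup (fun t : ℝ =>
    volume (shell N t (φ * t) ∩ Ω) / ENNReal.ofReal (t ^ ((N : ℝ) + r))) Filter.atTop

/-- Lower φ-shell Minkowski content of `Ω` at infinity. -/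
def lowerShellContent (N : ℕ) (Ω : Set (EuclideanSpace ℝ (Fin N))) (φ r : ℝ) : ℝ≥0∞ :=
  Filter.liminf (fun t : ℝ =>
    volume (shell N t (φ * t) ∩ Ω) / ENNReal.ofReal (t ^ ((N : ℝ) + r))) Filter.atTop

/-- Upper Minkowski content of `Ω` at infinity. -/
def upperContent (N : ℕ) (Ω : Set (EuclideanSpace ℝ (Fin N))) (r : ℝ) : ℝ≥0∞ :=
  Filter.limsup (fun t : ℝ =>
    volume (farBall N t ∩ Ω) / ENNReal.ofReal (t ^ ((N : ℝ) + r))) Filter.atTop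

/-- Lower Minkowski content of `Ω` at infinity. -/
def lowerContent (N : ℕ) (Ω : Set (EuclideanSpace ℝ (Fin N))) (r : ℝ) : ℝ≥0∞ :=
  Filter.liminf (fun t : ℝ =>
    volume (farBall N t ∩ Ω) / ENNReal.ofReal (t ^ ((N : ℝ) + r))) Filter.atTop

/-- Upper φ-shell Minkowski dimension of `Ω` at infinity, as an extended real. -/
def upperShellDim (N : ℕ) (Ω : Set (EuclideanSpace ℝ (Fin N))) (φ : ℝ) : EReal :=
  sInf ((fun r : ℝ => (r : EReal)) '' {r : ℝ | upperShellContent N Ω φ r = 0})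

/-- Lower φ-shell Minkowski dimension of `Ω` at infinity, as an extended real. -/
def lowerShellDim (N : ℕ) (Ω : Set (EuclideanSpace ℝ (Fin N))) (φ : ℝ) : EReal :=
  sInf ((fun r : ℝ => (r : EReal)) '' {r : ℝ | lowerShellContent N Ω φ r = 0})

lemma myDivScale (a b c : ℝ≥0∞) (hc0 : c ≠ 0) (hc : c ≠ ∞) :
    a / b = a / (c * b) * c := by
  rw [div_eq_mul_inv, div_eq_mul_inv, ENNReal.mul_inv (Or.inl hc0) (Or.inl hc)]
  calc a * b⁻¹ = a * b⁻¹ * (c⁻¹ * c) := by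
        rw [ENNReal.inv_mul_cancel hc0 hc, mul_one]
    _ = a * (c⁻¹ * b⁻¹) * c := by ring

lemma myCover (N : ℕ) (φ₁ φ₂ t : ℝ) (hφ₁ : 1 < φ₁) (K : ℕ) (hK : φ₂ ≤ φ₁ ^ K) (hK1 : 1 ≤ K)
    (ht : 0 < t) :
    shell N t (φ₂ * t) ⊆ ⋃ k ∈ Finset.range K, shell N (φ₁ ^ k * t) (φ₁ * (φ₁ ^ k * t)) := by
  rintro x ⟨h1, h2⟩
  have hφ₁0 : (0:ℝ) < φ₁ := lt_trans one_pos hφ₁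
  have hP : ∃ k, ‖x‖ < φ₁ ^ (k + 1) * t := by
    refine ⟨K, ?_⟩
    have h3 : φ₂ * t ≤ φ₁ ^ K * t := mul_le_mul_of_nonneg_right hK ht.le
    have h4 : φ₁ ^ K * t ≤ φ₁ ^ (K+1) * t := by
      have h5 : (φ₁:ℝ) ^ K ≤ φ₁ ^ (K+1) :=
        pow_le_pow_right₀ hφ₁.le (Nat.le_succ K)
      nlinarith
    linarith
  classical
  set k := Nat.find hP with hkdef
  have hklt : k < K := by
    have hle : Nat.find hP ≤ K - 1 := by
      apply Nat.find_le
      have hrw : (K-1)+1 = K := by omega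
      rw [hrw]
      exact lt_of_lt_of_le h2 (mul_le_mul_of_nonneg_right hK ht.le)
    omega
  have hub : ‖x‖ < φ₁ ^ (k+1) * t := Nat.find_spec hP
  have hlb : φ₁ ^ k * t ≤ ‖x‖ := by
    rcases Nat.eq_zero_or_pos k with h0 | hpos
    · rw [h0]; simpa using h1
    · have hm : ¬ ‖x‖ < φ₁ ^ ((k-1)+1) * t := Nat.find_min hP (by omega)
      have hrw : (k-1)+1 = k := by omega
      rw [hrw] at hm
      exact not_lt.mp hm
  refine mem_biUnion (Finset.mem_range.mpr hklt) ⟨hlb, ?_⟩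
  rw [← mul_assoc, ← pow_succ']
  exact hub

lemma myPointwiseMono (N : ℕ) (Ω : Set (EuclideanSpace ℝ (Fin N))) (φ ψ r : ℝ) (h : φ ≤ ψ) :
    ∀ᶠ t : ℝ in atTop,
      volume (shell N t (φ * t) ∩ Ω) / ENNReal.ofReal (t ^ ((N:ℝ)+r)) ≤
      volume (shell N t (ψ * t) ∩ Ω) / ENNReal.ofReal (t ^ ((N:ℝ)+r)) := by
  filter_upwards [eventually_ge_atTop (0:ℝ)] with t ht
  apply ENNReal.div_le_div_right
  apply measure_mono
  refine inter_subset_inter_left _ ?_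
  rintro x ⟨h1, h2⟩
  exact ⟨h1, h2.trans_le (by nlinarith)⟩

lemma myUpperZeroTrans (N : ℕ) (Ω : Set (EuclideanSpace ℝ (Fin N))) (φ₁ φ₂ r : ℝ)
    (hφ₁ : 1 < φ₁) (hφ₁₂ : φ₁ < φ₂)
    (h : upperShellContent N Ω φ₁ r = 0) : upperShellContent N Ω φ₂ r = 0 := by
  set g : ℝ → ℝ≥0∞ :=
    fun t => volume (shell N t (φ₁ * t) ∩ Ω) / ENNReal.ofReal (t ^ ((N:ℝ)+r)) with hg
  have hφ₁0 : (0:ℝ) < φ₁ := lt_trans one_pos hφ₁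
  have hglim : Tendsto g atTop (𝓝 0) := by
    have h1 : limsup g atTop = 0 := h
    have h2 : liminf g atTop = 0 := le_antisymm (h1 ▸ liminf_le_limsup) (zero_le)
    exact tendsto_of_liminf_eq_limsup h2 h1
  obtain ⟨K, hK⟩ := pow_unbounded_of_one_lt φ₂ hφ₁
  have hK1 : 1 ≤ K := by
    rcases Nat.eq_zero_or_pos K with h0 | h0
    · rw [h0] at hK; simp at hK; linarith
    · exact h0
  set c : ℕ → ℝ≥0∞ := fun k => ENNReal.ofReal ((φ₁ ^ k) ^ ((N:ℝ)+r)) with hc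
  have hcne : ∀ k, c k ≠ ∞ := fun k => ENNReal.ofReal_ne_top
  have hc0 : ∀ k, c k ≠ 0 := by
    intro k
    simp only [hc, ne_eq, ENNReal.ofReal_eq_zero, not_le]
    exact Real.rpow_pos_of_pos (pow_pos hφ₁0 k) _
  set S : ℝ → ℝ≥0∞ := fun t => ∑ k ∈ Finset.range K, g (φ₁ ^ k * t) * c k with hS
  have hSlim : Tendsto S atTop (𝓝 0) := by
    have hcal : Tendsto S atTop (𝓝 (∑ k ∈ Finset.range K, 0)) := by
      apply tendsto_finset_sum
      intro k _
      have h1 : Tendsto (fun t : ℝ => φ₁ ^ k * t) atTop atTop :=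
        Tendsto.const_mul_atTop (pow_pos hφ₁0 k) tendsto_id
      have h2 : Tendsto (fun t => g (φ₁ ^ k * t)) atTop (𝓝 0) := hglim.comp h1
      have h3 := ENNReal.Tendsto.mul_const h2 (Or.inr (hcne k))
      simpa using h3
    simpa using hcal
  have hbound : ∀ᶠ t : ℝ in atTop,
      volume (shell N t (φ₂ * t) ∩ Ω) / ENNReal.ofReal (t ^ ((N:ℝ)+r)) ≤ S t := by
    filter_upwards [eventually_gt_atTop (0:ℝ)] with t ht
    have hcov := myCover N φ₁ φ₂ t hφ₁ K hK.le hK1 ht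
    calc volume (shell N t (φ₂*t) ∩ Ω) / ENNReal.ofReal (t ^ ((N:ℝ)+r))
        ≤ volume ((⋃ k ∈ Finset.range K, shell N (φ₁^k*t) (φ₁*(φ₁^k*t))) ∩ Ω)
            / ENNReal.ofReal (t ^ ((N:ℝ)+r)) := by
          exact ENNReal.div_le_div_right
            (measure_mono (inter_subset_inter_left _ hcov)) _
      _ ≤ (∑ k ∈ Finset.range K, volume (shell N (φ₁^k*t) (φ₁*(φ₁^k*t)) ∩ Ω))
            / ENNReal.ofReal (t ^ ((N:ℝ)+r)) := by
          apply ENNReal.div_le_div_right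
          rw [iUnion₂_inter]
          exact measure_biUnion_finset_le _ _
      _ = ∑ k ∈ Finset.range K,
            volume (shell N (φ₁^k*t) (φ₁*(φ₁^k*t)) ∩ Ω) / ENNReal.ofReal (t ^ ((N:ℝ)+r)) := by
          simp only [div_eq_mul_inv, Finset.sum_mul]
      _ ≤ S t := by
          apply Finset.sum_le_sum
          intro k _
          have hrw : ENNReal.ofReal ((φ₁^k*t) ^ ((N:ℝ)+r))
              = c k * ENNReal.ofReal (t ^ ((N:ℝ)+r)) := by
            rw [Real.mul_rpow (pow_pos hφ₁0 k).le ht.le,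
              ENNReal.ofReal_mul (Real.rpow_nonneg (pow_pos hφ₁0 k).le _)]
          rw [myDivScale _ _ (c k) (hc0 k) (hcne k), ← hrw]
  have hle : upperShellContent N Ω φ₂ r ≤ limsup S atTop := limsup_le_limsup hbound
  rw [hSlim.limsup_eq] at hle
  exact le_antisymm hle (zero_le)

theorem shell_dim_independent_of_phi
    (N : ℕ) (Ω : Set (EuclideanSpace ℝ (Fin N))) (hΩ : MeasurableSet Ω)
    (φ₁ φ₂ : ℝ) (hφ₁ : 1 < φ₁) (hφ₁₂ : φ₁ < φ₂) :
    upperShellDim N Ω φ₁ = upperShellDim N Ω φ₂ ∧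
    lowerShellDim N Ω φ₁ ≤ lowerShellDim N Ω φ₂ := by
  constructor
  · have hsetEq : {r : ℝ | upperShellContent N Ω φ₁ r = 0}
        = {r : ℝ | upperShellContent N Ω φ₂ r = 0} := by
      ext r
      simp only [mem_setOf_eq]
      constructor
      · exact fun h0 => myUpperZeroTrans N Ω φ₁ φ₂ r hφ₁ hφ₁₂ h0
      · intro h0
        have hle : upperShellContent N Ω φ₁ r ≤ upperShellContent N Ω φ₂ r :=
          limsup_le_limsup (myPointwiseMono N Ω φ₁ φ₂ r hφ₁₂.le)
        exact le_antisymm (hle.trans h0.le) (zero_le)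
    rw [upperShellDim, upperShellDim, hsetEq]
  · apply sInf_le_sInf
    apply image_mono
    intro r h0
    have hle : lowerShellContent N Ω φ₁ r ≤ lowerShellContent N Ω φ₂ r :=
      liminf_le_liminf (myPointwiseMono N Ω φ₁ φ₂ r hφ₁₂.le)
    simp only [mem_setOf_eq] at h0 ⊢
    exact le_antisymm (hle.trans h0.le) (zero_le)
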